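/- Let V be a nonempty finite type, ℓu Δℓ : V → ℝ, y⋆ : V, and for w : ℝ let π_w(a) = exp(ℓu a + w * Δℓ a) / Z(w) with Z(w) = ∑_{k ∈ V} exp(ℓu k + w * Δℓ k), and L(w) = -log(π_w y⋆). Suppose the Advantage Margin Condition Δℓ y⋆ > ∑_{a ∈ V} π_v(a) * Δℓ a holds for every v in the closed interval [0, w₀] with w₀ > 0. Then L is strictly decreasing on [0, w₀]; in particular L(w₀) < L(0), i.e. the guided policy at guidance scale w₀ assigns strictly higher probability to the correct token y⋆ than the reference policy π_0. -/

import Mathlib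

open Real Finset

noncomputable def Zfun {V : Type*} [Fintype V] (ℓu Δℓ : V → ℝ) (w : ℝ) : ℝ :=
  ∑ k, Real.exp (ℓu k + w * Δℓ k)

noncomputable def pol {V : Type*} [Fintype V] (ℓu Δℓ : V → ℝ) (w : ℝ) (a : V) : ℝ :=
  Real.exp (ℓu a + w * Δℓ a) / Zfun ℓu Δℓ w

noncomputable def lossCE {V : Type*} [Fintype V] (ℓu Δℓ : V → ℝ) (ystar : V) (w : ℝ) : ℝ :=
  -Real.log (pol ℓu Δℓ w ystar)

section aux

variable {V : Type*} [Fintype V] [Nonempty V] (ℓu Δℓ : V → ℝ)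

lemma Zfun_pos (w : ℝ) : 0 < Zfun ℓu Δℓ w :=
  Finset.sum_pos (fun k _ => Real.exp_pos _) Finset.univ_nonempty

lemma Zfun_hasDerivAt (w : ℝ) :
    HasDerivAt (Zfun ℓu Δℓ) (∑ k, Δℓ k * Real.exp (ℓu k + w * Δℓ k)) w := by
  apply HasDerivAt.fun_sum
  intro k _
  have h : HasDerivAt (fun v : ℝ => ℓu k + v * Δℓ k) (Δℓ k) w := by
    simpa using ((hasDerivAt_mul_const (Δℓ k)).const_add (ℓu k))
  simpa [mul_comm] using h.exp

lemma loss_eq (ystar : V) (w : ℝ) :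
    lossCE ℓu Δℓ ystar w = Real.log (Zfun ℓu Δℓ w) - (ℓu ystar + w * Δℓ ystar) := by
  unfold lossCE pol
  rw [Real.log_div (Real.exp_ne_zero _) (Zfun_pos ℓu Δℓ w).ne', Real.log_exp]
  ring

lemma loss_hasDerivAt (ystar : V) (w : ℝ) :
    HasDerivAt (lossCE ℓu Δℓ ystar)
      ((∑ a, pol ℓu Δℓ w a * Δℓ a) - Δℓ ystar) w := by
  have hZ := Zfun_hasDerivAt ℓu Δℓ w
  have hlog := hZ.log (Zfun_pos ℓu Δℓ w).ne'
  have hlin : HasDerivAt (fun v : ℝ => ℓu ystar + v * Δℓ ystar) (Δℓ ystar) w := by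
    simpa using ((hasDerivAt_mul_const (Δℓ ystar)).const_add (ℓu ystar))
  have h := hlog.sub hlin
  have heq : (∑ k, Δℓ k * Real.exp (ℓu k + w * Δℓ k)) / Zfun ℓu Δℓ w - Δℓ ystar
      = (∑ a, pol ℓu Δℓ w a * Δℓ a) - Δℓ ystar := by
    congr 1
    rw [Finset.sum_div]
    refine Finset.sum_congr rfl fun a _ => ?_
    unfold pol
    ring
  rw [heq] at h
  exact h.congr_of_eventuallyEq (by filter_upwards with v using loss_eq ℓu Δℓ ystar v)

end aux

/-- If the Advantage Margin Condition holds for every `v ∈ [0, w₀]` with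
`w₀ > 0`, then the loss `L` is strictly decreasing on `[0, w₀]`; in particular
`L(w₀) < L(0)`, i.e. the guided policy at scale `w₀` assigns strictly higher
probability to `y⋆` than the reference policy `π_0`. -/
theorem loss_strictAnti_of_margin {V : Type*} [Fintype V] [Nonempty V]
    (ℓu Δℓ : V → ℝ) (ystar : V) (w₀ : ℝ) (hw₀ : 0 < w₀)
    (hmargin : ∀ v ∈ Set.Icc (0 : ℝ) w₀,
      Δℓ ystar > ∑ a, pol ℓu Δℓ v a * Δℓ a) :
    StrictAntiOn (lossCE ℓu Δℓ ystar) (Set.Icc 0 w₀) ∧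
      lossCE ℓu Δℓ ystar w₀ < lossCE ℓu Δℓ ystar 0 ∧
      pol ℓu Δℓ 0 ystar < pol ℓu Δℓ w₀ ystar := by
  have hanti : StrictAntiOn (lossCE ℓu Δℓ ystar) (Set.Icc 0 w₀) := by
    apply strictAntiOn_of_deriv_neg (convex_Icc 0 w₀)
    · exact fun x _ => ((loss_hasDerivAt ℓu Δℓ ystar x).differentiableAt).continuousAt.continuousWithinAt
    · intro x hx
      rw [interior_Icc] at hx
      rw [(loss_hasDerivAt ℓu Δℓ ystar x).deriv]
      have := hmargin x ⟨hx.1.le, hx.2.le⟩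
      linarith
  have hlt : lossCE ℓu Δℓ ystar w₀ < lossCE ℓu Δℓ ystar 0 :=
    hanti (Set.left_mem_Icc.mpr hw₀.le) (Set.right_mem_Icc.mpr hw₀.le) hw₀
  refine ⟨hanti, hlt, ?_⟩
  have hp0 : 0 < pol ℓu Δℓ 0 ystar := div_pos (Real.exp_pos _) (Zfun_pos ℓu Δℓ 0)
  have hpw : 0 < pol ℓu Δℓ w₀ ystar := div_pos (Real.exp_pos _) (Zfun_pos ℓu Δℓ w₀)
  have : Real.log (pol ℓu Δℓ 0 ystar) < Real.log (pol ℓu Δℓ w₀ ystar) := by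
    unfold lossCE at hlt; linarith
  exact (Real.log_lt_log_iff hp0 hpw).mp this
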